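/- For the fine-grained attribution over {f, x_1, …, x_d} with linear mechanisms f^(k)(x) = ∑_j β_j^(k) x_j, the Shapley value of input variable x_i equals the closed-form linear attribution ((β_i¹ + β_i²)/2)(x_i² − x_i¹). -/

import Mathlib

open Finset

lemma termA (e k : ℕ) (h : k ≤ e) :
    e.choose k * k.factorial * (e + 1 - k).factorial = e.factorial * (e + 1 - k) := by
  have h1 : e + 1 - k = (e - k) + 1 := by omega
  have h2 := Nat.choose_mul_factorial_mul_factorial h
  calc e.choose k * k.factorial * (e + 1 - k).factorial
      = (e.choose k * k.factorial * (e - k).factorial) * ((e - k) + 1) := by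
        rw [h1, Nat.factorial_succ]; ring
    _ = e.factorial * (e + 1 - k) := by rw [h2, h1]

lemma termB (e k : ℕ) (h : k ≤ e) :
    e.choose k * (k + 1).factorial * (e - k).factorial = e.factorial * (k + 1) := by
  have h2 := Nat.choose_mul_factorial_mul_factorial h
  calc e.choose k * (k + 1).factorial * (e - k).factorial
      = (e.choose k * k.factorial * (e - k).factorial) * (k + 1) := by
        rw [Nat.factorial_succ]; ring
    _ = e.factorial * (k + 1) := by rw [h2]

lemma sumsucc (e : ℕ) : 2 * ∑ k ∈ range (e + 1), (k + 1) = (e + 1) * (e + 2) := by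
  have h := Finset.sum_range_id_mul_two (e + 2)
  rw [Finset.sum_range_succ'] at h
  simp at h
  simpa [mul_comm] using h

lemma sumrefl (e : ℕ) : ∑ k ∈ range (e + 1), (e + 1 - k) = ∑ k ∈ range (e + 1), (k + 1) := by
  rw [← Finset.sum_range_reflect (fun j => j + 1) (e + 1)]
  apply sum_congr rfl
  intro k hk
  have := mem_range.mp hk
  omega

lemma helperA (e : ℕ) :
    2 * ∑ k ∈ range (e + 1), e.choose k * k.factorial * (e + 1 - k).factorial
      = (e + 2).factorial := by
  have h : ∑ k ∈ range (e + 1), e.choose k * k.factorial * (e + 1 - k).factorial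
      = ∑ k ∈ range (e + 1), e.factorial * (e + 1 - k) := by
    apply sum_congr rfl
    intro k hk
    exact termA e k (Nat.lt_succ_iff.mp (mem_range.mp hk))
  rw [h, ← mul_sum, sumrefl, show (e+2).factorial = (e+2)*(e+1)*e.factorial by
    rw [Nat.factorial_succ, Nat.factorial_succ]; ring]
  rw [← mul_assoc, mul_comm 2 e.factorial, mul_assoc, sumsucc]
  ring

lemma helperB (e : ℕ) :
    2 * ∑ k ∈ range (e + 1), e.choose k * (k + 1).factorial * (e - k).factorial
      = (e + 2).factorial := by
  have h : ∑ k ∈ range (e + 1), e.choose k * (k + 1).factorial * (e - k).factorial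
      = ∑ k ∈ range (e + 1), e.factorial * (k + 1) := by
    apply sum_congr rfl
    intro k hk
    exact termB e k (Nat.lt_succ_iff.mp (mem_range.mp hk))
  rw [h, ← mul_sum, show (e+2).factorial = (e+2)*(e+1)*e.factorial by
    rw [Nat.factorial_succ, Nat.factorial_succ]; ring]
  rw [← mul_assoc, mul_comm 2 e.factorial, mul_assoc, sumsucc]
  ring

lemma powsumA {α : Type*} [DecidableEq α] (T : Finset α) (e : ℕ) (hT : T.card = e) :
    ∑ B ∈ T.powerset, ((B.card.factorial * (e + 1 - B.card).factorial : ℝ) / (e + 2).factorial)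
      = 1 / 2 := by
  rw [Finset.sum_powerset, hT]
  have h : ∀ k ∈ range (e + 1),
      ∑ B ∈ T.powersetCard k, ((B.card.factorial * (e + 1 - B.card).factorial : ℝ) / (e + 2).factorial)
        = (e.choose k : ℝ) * ((k.factorial * (e + 1 - k).factorial : ℝ) / (e + 2).factorial) := by
    intro k hk
    rw [Finset.sum_congr rfl (fun B hB => by
      rw [(Finset.mem_powersetCard.mp hB).2]), sum_const, ← hT, Finset.card_powersetCard, hT,
      nsmul_eq_mul]
  rw [Finset.sum_congr rfl h]
  have hcast : ∑ k ∈ range (e + 1), (e.choose k : ℝ) * ((k.factorial * (e + 1 - k).factorial : ℝ) / (e + 2).factorial)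
      = ((∑ k ∈ range (e + 1), e.choose k * k.factorial * (e + 1 - k).factorial : ℕ) : ℝ) / (e + 2).factorial := by
    push_cast
    rw [Finset.sum_div]
    apply sum_congr rfl
    intro k _
    ring
  rw [hcast]
  have h2 := helperA e
  have hfac : ((e + 2).factorial : ℝ) ≠ 0 := Nat.cast_ne_zero.mpr (Nat.factorial_ne_zero _)
  field_simp
  push_cast [← h2]
  ring

lemma powsumB {α : Type*} [DecidableEq α] (T : Finset α) (e : ℕ) (hT : T.card = e) :
    ∑ B ∈ T.powerset, (((B.card + 1).factorial * (e - B.card).factorial : ℝ) / (e + 2).factorial)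
      = 1 / 2 := by
  rw [Finset.sum_powerset, hT]
  have h : ∀ k ∈ range (e + 1),
      ∑ B ∈ T.powersetCard k, (((B.card + 1).factorial * (e - B.card).factorial : ℝ) / (e + 2).factorial)
        = (e.choose k : ℝ) * (((k + 1).factorial * (e - k).factorial : ℝ) / (e + 2).factorial) := by
    intro k hk
    rw [Finset.sum_congr rfl (fun B hB => by
      rw [(Finset.mem_powersetCard.mp hB).2]), sum_const, ← hT, Finset.card_powersetCard, hT,
      nsmul_eq_mul]
  rw [Finset.sum_congr rfl h]
  have hcast : ∑ k ∈ range (e + 1), (e.choose k : ℝ) * (((k + 1).factorial * (e - k).factorial : ℝ) / (e + 2).factorial)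
      = ((∑ k ∈ range (e + 1), e.choose k * (k + 1).factorial * (e - k).factorial : ℕ) : ℝ) / (e + 2).factorial := by
    push_cast
    rw [Finset.sum_div]
    apply sum_congr rfl
    intro k _
    ring
  rw [hcast]
  have h2 := helperB e
  have hfac : ((e + 2).factorial : ℝ) ≠ 0 := Nat.cast_ne_zero.mpr (Nat.factorial_ne_zero _)
  field_simp
  push_cast [← h2]
  ring

-- marginal contribution
lemma marginal (d : ℕ) (β1 β2 x1 x2 : Fin d → ℝ) (i : Fin d)
    (A : Finset (Fin (d + 1))) (hA : i.succ ∉ A) :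
    (∑ j, (if (0 : Fin (d + 1)) ∈ A ∪ {i.succ} then β2 j else β1 j) *
        (if (j.succ : Fin (d + 1)) ∈ A ∪ {i.succ} then x2 j else x1 j))
      - (∑ j, (if (0 : Fin (d + 1)) ∈ A then β2 j else β1 j) *
        (if (j.succ : Fin (d + 1)) ∈ A then x2 j else x1 j))
      = (if (0 : Fin (d + 1)) ∈ A then β2 i else β1 i) * (x2 i - x1 i) := by
  rw [← Finset.sum_sub_distrib]
  rw [Finset.sum_eq_single_of_mem i (mem_univ i)]
  · have h0 : ((0 : Fin (d + 1)) ∈ A ∪ {i.succ}) ↔ ((0 : Fin (d + 1)) ∈ A) := by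
      simp [Finset.mem_union, (Fin.succ_ne_zero i).symm, eq_comm]
    have hi : (i.succ : Fin (d + 1)) ∈ A ∪ {i.succ} := by simp
    rw [if_pos hi, if_neg hA]
    by_cases h : (0 : Fin (d + 1)) ∈ A
    · rw [if_pos (h0.mpr h), if_pos h]; ring
    · rw [if_neg (fun hh => h (h0.mp hh)), if_neg h]; ring
  · intro j _ hj
    have h0 : ((0 : Fin (d + 1)) ∈ A ∪ {i.succ}) ↔ ((0 : Fin (d + 1)) ∈ A) := by
      simp [Finset.mem_union, (Fin.succ_ne_zero i).symm, eq_comm]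
    have hj' : ((j.succ : Fin (d + 1)) ∈ A ∪ {i.succ}) ↔ ((j.succ : Fin (d + 1)) ∈ A) := by
      simp [Finset.mem_union, Fin.succ_inj, hj]
    by_cases h : (0 : Fin (d + 1)) ∈ A <;>
      by_cases h2 : (j.succ : Fin (d + 1)) ∈ A <;>
      simp [h, h2, h0, hj', hj, (Fin.succ_ne_zero i).symm] <;> ring

theorem fine_shapley_linear_input (d : ℕ) (β1 β2 x1 x2 : Fin d → ℝ) :
    let v : Finset (Fin (d + 1)) → ℝ := fun A =>
      ∑ j, (if (0 : Fin (d + 1)) ∈ A then β2 j else β1 j) *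
        (if (j.succ : Fin (d + 1)) ∈ A then x2 j else x1 j)
    let φ : Fin (d + 1) → ℝ := fun w =>
      ∑ A ∈ (Finset.univ \ {w}).powerset,
        ((A.card.factorial * (d - A.card).factorial : ℝ) / (d + 1).factorial) *
          (v (A ∪ {w}) - v A)
    ∀ i : Fin d, φ i.succ = ((β1 i + β2 i) / 2) * (x2 i - x1 i) := by
  intro v φ i
  obtain ⟨e, rfl⟩ : ∃ e, d = e + 1 := ⟨d - 1, by have := i.is_lt; omega⟩
  have h0S : (0 : Fin (e + 1 + 1)) ∈ Finset.univ \ {i.succ} := by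
    simp [(Fin.succ_ne_zero i).symm, eq_comm]
  set S : Finset (Fin (e + 1 + 1)) := Finset.univ \ {i.succ} with hSdef
  set T : Finset (Fin (e + 1 + 1)) := S.erase 0 with hTdef
  have h0T : (0 : Fin (e + 1 + 1)) ∉ T := Finset.notMem_erase _ _
  have hST : S = insert 0 T := (Finset.insert_erase h0S).symm
  have hScard : S.card = e + 1 := by
    rw [hSdef, Finset.card_sdiff_of_subset (by simp), Finset.card_univ, Finset.card_singleton]
    simp
  have hTcard : T.card = e := by
    rw [hTdef, Finset.card_erase_of_mem h0S, hScard]; omega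
  -- rewrite φ using the marginal lemma
  have hφ : φ i.succ = ∑ A ∈ S.powerset,
      ((A.card.factorial * (e + 1 - A.card).factorial : ℝ) / (e + 2).factorial) *
        ((if (0 : Fin (e + 1 + 1)) ∈ A then β2 i else β1 i) * (x2 i - x1 i)) := by
    apply Finset.sum_congr rfl
    intro A hA
    have hAi : i.succ ∉ A := fun h => by
      have := Finset.mem_powerset.mp hA h
      simp [hSdef] at this
    rw [marginal (e + 1) β1 β2 x1 x2 i A hAi]
  rw [hφ, hST, Finset.sum_powerset_insert h0T]
  have hsum1 : ∑ B ∈ T.powerset,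
      ((B.card.factorial * (e + 1 - B.card).factorial : ℝ) / (e + 2).factorial) *
        ((if (0 : Fin (e + 1 + 1)) ∈ B then β2 i else β1 i) * (x2 i - x1 i))
      = (1 / 2) * (β1 i * (x2 i - x1 i)) := by
    rw [Finset.sum_congr rfl (fun B hB => by
      have h0B : (0 : Fin (e + 1 + 1)) ∉ B := fun h => h0T (Finset.mem_powerset.mp hB h)
      rw [if_neg h0B]), ← Finset.sum_mul, powsumA T e hTcard]
  have hsum2 : ∑ B ∈ T.powerset,
      (((insert (0 : Fin (e + 1 + 1)) B).card.factorial *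
        (e + 1 - (insert (0 : Fin (e + 1 + 1)) B).card).factorial : ℝ) / (e + 2).factorial) *
        ((if (0 : Fin (e + 1 + 1)) ∈ insert 0 B then β2 i else β1 i) * (x2 i - x1 i))
      = (1 / 2) * (β2 i * (x2 i - x1 i)) := by
    rw [Finset.sum_congr rfl (fun B hB => by
      have h0B : (0 : Fin (e + 1 + 1)) ∉ B := fun h => h0T (Finset.mem_powerset.mp hB h)
      rw [if_pos (Finset.mem_insert_self _ _), Finset.card_insert_of_notMem h0B,
        show e + 1 - (B.card + 1) = e - B.card by omega]), ← Finset.sum_mul,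
      powsumB T e hTcard]
  rw [hsum1, hsum2]
  ring
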